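/- Let n be a positive integer and let φ be a kV₄-module endomorphism of M_n. If φ factors through a projective kV₄-module, then the range of φ is contained in the k-linear span of {b_1, …, b_n} (the socle of M_n). -/

import Mathlib

universe u v w

/-- A homomorphism of `A`-modules factors through a projective `A`-module. -/
def FactorsThroughProjective {A : Type u} [Ring A] {M : Type v} {N : Type w}
    [AddCommGroup M] [Module A M] [AddCommGroup N] [Module A N]
    (φ : M →ₗ[A] N) : Prop :=
  ∃ (Q : ModuleCat.{max u v w} A) (f : M →ₗ[A] Q) (g : Q →ₗ[A] N),
    Module.Projective A Q ∧ g ∘ₗ f = φ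

/-- The Klein four group. -/
abbrev V4 : Type := Multiplicative (ZMod 2 × ZMod 2)

/-- The first generator `s` of the Klein four group. -/
def sV4 : V4 := Multiplicative.ofAdd (1, 0)

/-- The second generator `t` of the Klein four group. -/
def tV4 : V4 := Multiplicative.ofAdd (0, 1)

/-- `B` is a `k`-basis `a_1,…,a_n,b_1,…,b_n` of the `kV₄`-module `M` on which
`x = s - 1` and `y = t - 1` act by `x·a_i = b_i`, `y·a_i = b_{i+1}` (`i < n`),
`y·a_n = 0`, `x·b_i = y·b_i = 0`; i.e. `M` is the module `M_n`. -/
def IsKleinModuleBasis (k : Type) [Field k] (n : ℕ) (M : Type) [AddCommGroup M]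
    [Module k M] [Module (MonoidAlgebra k V4) M]
    [IsScalarTower k (MonoidAlgebra k V4) M]
    (B : Module.Basis (Fin n ⊕ Fin n) k M) : Prop :=
  (∀ i : Fin n, (MonoidAlgebra.of k V4 sV4 - 1) • B (Sum.inl i) = B (Sum.inr i)) ∧
  (∀ (i : Fin n) (h : (i : ℕ) + 1 < n),
      (MonoidAlgebra.of k V4 tV4 - 1) • B (Sum.inl i) = B (Sum.inr ⟨(i : ℕ) + 1, h⟩)) ∧
  (∀ i : Fin n, (i : ℕ) + 1 = n → (MonoidAlgebra.of k V4 tV4 - 1) • B (Sum.inl i) = 0) ∧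
  (∀ i : Fin n, (MonoidAlgebra.of k V4 sV4 - 1) • B (Sum.inr i) = 0) ∧
  (∀ i : Fin n, (MonoidAlgebra.of k V4 tV4 - 1) • B (Sum.inr i) = 0)

set_option linter.unusedSectionVars false

section Stmt8Aux
variable (k : Type) [Field k] [CharP k 2]

noncomputable abbrev xel : MonoidAlgebra k V4 := MonoidAlgebra.of k V4 sV4 - 1
noncomputable abbrev yel : MonoidAlgebra k V4 := MonoidAlgebra.of k V4 tV4 - 1
noncomputable abbrev Nel : MonoidAlgebra k V4 := xel k * yel k

lemma two_zero : (2 : MonoidAlgebra k V4) = 0 := by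
  have h : (2:k) = 0 := by
    have := CharP.cast_eq_zero k 2; exact_mod_cast this
  rw [← map_ofNat (algebraMap k (MonoidAlgebra k V4)) 2, h, map_zero]

lemma Nel_mul_of : ∀ g : V4, Nel k * MonoidAlgebra.of k V4 g = Nel k := by
  have ha : MonoidAlgebra.of k V4 sV4 * MonoidAlgebra.of k V4 sV4 = 1 := by
    rw [← map_mul, show sV4 * sV4 = 1 by decide, map_one]
  have hb : MonoidAlgebra.of k V4 tV4 * MonoidAlgebra.of k V4 tV4 = 1 := by
    rw [← map_mul, show tV4 * tV4 = 1 by decide, map_one]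
  have h2 := two_zero k
  intro g
  rcases (by decide : ∀ g : V4, g = 1 ∨ g = sV4 ∨ g = tV4 ∨ g = sV4 * tV4) g with h | h | h | h <;>
    subst h
  · rw [map_one, mul_one]
  · simp only [Nel, xel, yel]
    set a := MonoidAlgebra.of k V4 sV4
    set b := MonoidAlgebra.of k V4 tV4
    linear_combination (b - 1) * ha + (b - 1) * (1 - a) * h2
  · simp only [Nel, xel, yel]
    set a := MonoidAlgebra.of k V4 sV4
    set b := MonoidAlgebra.of k V4 tV4
    linear_combination (a - 1) * hb + (a - 1) * (1 - b) * h2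
  · simp only [Nel, xel, yel, map_mul]
    set a := MonoidAlgebra.of k V4 sV4
    set b := MonoidAlgebra.of k V4 tV4
    linear_combination (b*b - b) * ha + (1 - a) * hb

noncomputable def Lst : MonoidAlgebra k V4 →ₗ[k] k := Finsupp.lapply (sV4 * tV4) ∘ₗ (MonoidAlgebra.coeffLinearEquiv k).toLinearMap

lemma Lst_single (g : V4) (c : k) :
    Lst k (MonoidAlgebra.single g c) = if g = sV4 * tV4 then c else 0 := by
  show (Finsupp.single g c : V4 →₀ k) (sV4 * tV4) = _
  exact Finsupp.single_apply

lemma Nel_apply : Lst k (Nel k) = 1 := by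
  have hexp : Nel k = MonoidAlgebra.of k V4 (sV4 * tV4) - MonoidAlgebra.of k V4 sV4
      - MonoidAlgebra.of k V4 tV4 + 1 := by
    simp only [Nel, xel, yel, map_mul]; ring
  rw [hexp]
  rw [map_add, map_sub, map_sub]
  simp only [MonoidAlgebra.of_apply, MonoidAlgebra.one_def, Lst_single]
  simp [show sV4 ≠ sV4 * tV4 from by decide, show tV4 ≠ sV4 * tV4 from by decide,
    show (1:V4) ≠ sV4 * tV4 from by decide]

noncomputable def eps : MonoidAlgebra k V4 →ₐ[k] k := MonoidAlgebra.lift k k V4 1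

lemma eps_of (g : V4) : eps k (MonoidAlgebra.of k V4 g) = 1 := by
  simp [eps]

lemma Nel_mul (z : MonoidAlgebra k V4) : Nel k * z = eps k z • Nel k := by
  induction z using MonoidAlgebra.induction_on with
  | of g => rw [Nel_mul_of, eps_of, one_smul]
  | add f g hf hg => rw [mul_add, hf, hg, map_add, add_smul]
  | smul r f hf => rw [mul_smul_comm, hf, map_smul, smul_smul, smul_eq_mul]

lemma sub_eps_mem (z : MonoidAlgebra k V4) :
    z - algebraMap k (MonoidAlgebra k V4) (eps k z) ∈ Ideal.span {xel k, yel k} := by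
  induction z using MonoidAlgebra.induction_on with
    | of g =>
      rw [eps_of, map_one]
      rcases (by decide : ∀ g : V4, g = 1 ∨ g = sV4 ∨ g = tV4 ∨ g = sV4 * tV4) g with h|h|h|h <;>
        subst h
      · rw [map_one, sub_self]; exact zero_mem _
      · exact Ideal.subset_span (by simp)
      · exact Ideal.subset_span (by simp)
      · have hst : MonoidAlgebra.of k V4 (sV4 * tV4) - 1 = xel k * yel k + xel k + yel k := by
          rw [map_mul]; simp only [xel, yel]; ring
        rw [hst]
        exact add_mem (add_mem (Ideal.mul_mem_left _ _
          (Ideal.subset_span (by simp))) (Ideal.subset_span (by simp)))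
          (Ideal.subset_span (by simp))
    | add f g hf hg =>
      have : f + g - algebraMap k (MonoidAlgebra k V4) (eps k (f + g)) =
          (f - algebraMap k _ (eps k f)) + (g - algebraMap k _ (eps k g)) := by
        rw [map_add, map_add]; ring
      rw [this]; exact add_mem hf hg
    | smul r f hf =>
      have : r • f - algebraMap k (MonoidAlgebra k V4) (eps k (r • f)) =
          algebraMap k (MonoidAlgebra k V4) r * (f - algebraMap k _ (eps k f)) := by
        rw [map_smul, smul_eq_mul, map_mul, Algebra.smul_def]; ring
      rw [this]; exact Ideal.mul_mem_left _ _ hf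

lemma mem_ideal (z : MonoidAlgebra k V4) (hz : Nel k * z = 0) :
    z ∈ Ideal.span {xel k, yel k} := by
  have heps : eps k z = 0 := by
    have h := Nel_mul k z
    rw [hz] at h
    have h2 := congrArg (Lst k) h.symm
    rw [map_smul, Nel_apply, smul_eq_mul, mul_one, map_zero] at h2
    exact h2
  have key := sub_eps_mem k z
  rw [heps, map_zero, sub_zero] at key
  exact key

end Stmt8Aux

/-- If an endomorphism of `M_n` factors through a projective `kV₄`-module then
its range is contained in the span of `b_1,…,b_n` (the socle of `M_n`). -/
theorem stmt8 (k : Type) [Field k] [IsAlgClosed k] [CharP k 2]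
    (n : ℕ) (hn : 0 < n)
    (M : Type) [AddCommGroup M] [Module k M] [Module (MonoidAlgebra k V4) M]
    [IsScalarTower k (MonoidAlgebra k V4) M]
    (B : Module.Basis (Fin n ⊕ Fin n) k M) (hB : IsKleinModuleBasis k n M B)
    (φ : M →ₗ[MonoidAlgebra k V4] M) (hφ : FactorsThroughProjective φ) :
    ∀ m : M, φ m ∈ Submodule.span k (Set.range fun i : Fin n => B (Sum.inr i)) := by
  intro m
  obtain ⟨hx1, hy1, hy2, hx2, hy3⟩ := hB
  set S : Submodule k M := Submodule.span k (Set.range fun i : Fin n => B (Sum.inr i)) with hSdef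
  have smulLin : ∀ (a : MonoidAlgebra k V4) (c : k) (v : M), a • (c • v) = c • (a • v) := by
    intro a c v
    rw [← algebraMap_smul (MonoidAlgebra k V4) c v, ← mul_smul, mul_comm, mul_smul,
      algebraMap_smul]
  have hmemS : ∀ i : Fin n, B (Sum.inr i) ∈ S := fun i => Submodule.subset_span ⟨i, rfl⟩
  have hxS : ∀ v ∈ S, xel k • v = 0 := by
    intro v hv
    induction hv using Submodule.span_induction with
    | mem w h => obtain ⟨i, rfl⟩ := h; exact hx2 i
    | zero => exact smul_zero _
    | add w u _ _ hw hu => rw [smul_add, hw, hu, add_zero]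
    | smul c w _ hw => rw [smulLin, hw, smul_zero]
  have hxM : ∀ v : M, xel k • v ∈ S := by
    intro v
    have hv : v ∈ Submodule.span k (Set.range B) := by rw [B.span_eq]; exact Submodule.mem_top
    induction hv using Submodule.span_induction with
    | mem w h =>
      obtain ⟨j, rfl⟩ := h
      cases j with
      | inl i => rw [hx1 i]; exact hmemS i
      | inr i => rw [hx2 i]; exact zero_mem _
    | zero => rw [smul_zero]; exact zero_mem _
    | add w u _ _ hw hu => rw [smul_add]; exact add_mem hw hu
    | smul c w _ hw => rw [smulLin]; exact Submodule.smul_mem _ _ hw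
  have hyM : ∀ v : M, yel k • v ∈ S := by
    intro v
    have hv : v ∈ Submodule.span k (Set.range B) := by rw [B.span_eq]; exact Submodule.mem_top
    induction hv using Submodule.span_induction with
    | mem w h =>
      obtain ⟨j, rfl⟩ := h
      cases j with
      | inl i =>
        rcases Nat.lt_or_ge ((i : ℕ) + 1) n with h' | h'
        · rw [hy1 i h']; exact hmemS _
        · have : (i : ℕ) + 1 = n := le_antisymm (Nat.succ_le_of_lt i.isLt) h'
          rw [hy2 i this]; exact zero_mem _
      | inr i => rw [hy3 i]; exact zero_mem _
    | zero => rw [smul_zero]; exact zero_mem _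
    | add w u _ _ hw hu => rw [smul_add]; exact add_mem hw hu
    | smul c w _ hw => rw [smulLin]; exact Submodule.smul_mem _ _ hw
  have hNzero : ∀ v : M, Nel k • v = 0 := by
    intro v
    rw [show Nel k = xel k * yel k from rfl, mul_smul]
    exact hxS _ (hyM v)
  have hSsmul : ∀ (a : MonoidAlgebra k V4) (v : M), v ∈ S → a • v ∈ S := by
    intro a v hv
    induction hv using Submodule.span_induction with
    | mem w h =>
      obtain ⟨i, rfl⟩ := h
      induction a using MonoidAlgebra.induction_on with
      | of g =>
        have hs : MonoidAlgebra.of k V4 sV4 • B (Sum.inr i) = B (Sum.inr i) := by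
          have := hx2 i; rwa [sub_smul, one_smul, sub_eq_zero] at this
        have ht : MonoidAlgebra.of k V4 tV4 • B (Sum.inr i) = B (Sum.inr i) := by
          have := hy3 i; rwa [sub_smul, one_smul, sub_eq_zero] at this
        have hg : MonoidAlgebra.of k V4 g • B (Sum.inr i) = B (Sum.inr i) := by
          rcases (by decide : ∀ g : V4, g = 1 ∨ g = sV4 ∨ g = tV4 ∨ g = sV4 * tV4) g
            with h|h|h|h <;> subst h
          · rw [map_one, one_smul]
          · exact hs
          · exact ht
          · rw [map_mul, mul_smul, ht, hs]
        rw [hg]; exact hmemS i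
      | add f g hf hg => rw [add_smul]; exact add_mem hf hg
      | smul r f hf => rw [smul_assoc]; exact Submodule.smul_mem _ _ hf
    | zero => rw [smul_zero]; exact zero_mem _
    | add w u _ _ hw hu => rw [smul_add]; exact add_mem hw hu
    | smul c w _ hw => rw [smulLin]; exact Submodule.smul_mem _ _ hw
  have hIS : ∀ a ∈ Ideal.span {xel k, yel k}, ∀ v : M, a • v ∈ S := by
    intro a ha
    induction ha using Submodule.span_induction with
    | mem z h =>
      rcases h with h | h
      · intro v; rw [h]; exact hxM v
      · intro v; rw [Set.mem_singleton_iff.mp h]; exact hyM v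
    | zero => intro v; rw [zero_smul]; exact zero_mem _
    | add z u _ _ hz hu => intro v; rw [add_smul]; exact add_mem (hz v) (hu v)
    | smul c z _ hz => intro v; rw [smul_eq_mul, mul_smul]; exact hSsmul c _ (hz v)
  obtain ⟨Q, f, g, hQ, hgf⟩ := hφ
  obtain ⟨σ, hσ⟩ := Module.projective_def.mp hQ
  set q : Q := f m with hq
  have hNq : Nel k • q = 0 := by
    rw [hq, ← map_smul, hNzero, map_zero]
  have hcoef : ∀ i, σ q i ∈ Ideal.span {xel k, yel k} := by
    intro i
    apply mem_ideal
    have h1 : Nel k • σ q = 0 := by rw [← map_smul, hNq, map_zero]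
    have h2 := DFunLike.congr_fun h1 i
    rwa [Finsupp.smul_apply, smul_eq_mul, Finsupp.zero_apply] at h2
  have hphim : φ m = g q := by rw [← hgf]; rfl
  rw [hphim, ← hσ q, Finsupp.linearCombination_apply, Finsupp.sum, map_sum]
  apply Submodule.sum_mem
  intro i hi
  rw [map_smul]
  exact hIS _ (hcoef i) _
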